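/- For every pair of integers n, j with n ≥ 3 and 1 ≤ j ≤ n−2, and with N = C(n,2), one has (1/(4·√(2π)·√n))·(n^{1−j/n}·κ(j/n))^n ≤ N^{n−j}/(n−j)! ≤ (1/√(2π))·(n^{1−j/n}·κ(j/n))^n. -/

import Mathlib

open Real

lemma sqrt_pi_le_stirling (m : ℕ) : Real.sqrt π ≤ Stirling.stirlingSeq (m+1) := by
  have ht : Filter.Tendsto (Stirling.stirlingSeq ∘ Nat.succ) Filter.atTop (nhds (Real.sqrt π)) :=
    (Filter.tendsto_add_atTop_iff_nat 1).mpr Stirling.tendsto_stirlingSeq_sqrt_pi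
  exact Stirling.stirlingSeq'_antitone.le_of_tendsto ht m

lemma stirling_le (m : ℕ) : Stirling.stirlingSeq (m+1) ≤ Real.exp 1 / Real.sqrt 2 := by
  have := Stirling.stirlingSeq'_antitone (Nat.zero_le m)
  simpa [Stirling.stirlingSeq_one] using this

lemma fact_low (m : ℕ) (hm : 1 ≤ m) :
    Real.sqrt (2*π) * ((m:ℝ)/Real.exp 1)^m ≤ (m.factorial : ℝ) := by
  obtain ⟨k, rfl⟩ := Nat.exists_eq_add_of_le' hm
  have h := sqrt_pi_le_stirling k
  rw [Stirling.stirlingSeq] at h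
  have hd : 0 < Real.sqrt (2*(k+1:ℕ)) * (((k+1:ℕ):ℝ)/Real.exp 1)^(k+1) := by positivity
  rw [le_div_iff₀ hd] at h
  calc Real.sqrt (2*π) * (((k+1:ℕ):ℝ)/Real.exp 1)^(k+1)
      ≤ Real.sqrt π * Real.sqrt (2*(k+1:ℕ)) * (((k+1:ℕ):ℝ)/Real.exp 1)^(k+1) := by
        have h1 : Real.sqrt (2*π) ≤ Real.sqrt π * Real.sqrt (2*(k+1:ℕ)) := by
          rw [← Real.sqrt_mul (by positivity)]
          apply Real.sqrt_le_sqrt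
          have : (1:ℝ) ≤ ((k+1:ℕ):ℝ) := by exact_mod_cast Nat.le_add_left 1 k
          nlinarith [Real.pi_pos]
        exact mul_le_mul_of_nonneg_right h1 (by positivity)
      _ ≤ _ := by simpa [mul_assoc] using h

lemma fact_up (m : ℕ) (hm : 1 ≤ m) :
    (m.factorial : ℝ) ≤ Real.exp 1 * Real.sqrt m * ((m:ℝ)/Real.exp 1)^m := by
  obtain ⟨k, rfl⟩ := Nat.exists_eq_add_of_le' hm
  have h := stirling_le k
  rw [Stirling.stirlingSeq] at h
  have hd : 0 < Real.sqrt (2*(k+1:ℕ)) * (((k+1:ℕ):ℝ)/Real.exp 1)^(k+1) := by positivity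
  rw [div_le_iff₀ hd] at h
  refine h.trans_eq ?_
  have h2 : Real.sqrt (2*(k+1:ℕ)) = Real.sqrt 2 * Real.sqrt ((k+1:ℕ)) := by
    rw [← Real.sqrt_mul (by norm_num)]
  rw [h2]
  have h3 : (0:ℝ) < Real.sqrt 2 := by positivity
  field_simp

noncomputable def kappa (x : ℝ) : ℝ := (Real.exp 1 / 2) ^ (1 - x) * (1 - x) ^ (-(1 - x))

set_option maxHeartbeats 1000000 in
theorem stmt_13 (n j : ℕ) (hn : 3 ≤ n) (hj1 : 1 ≤ j) (hj2 : j ≤ n - 2) :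
    1 / (4 * Real.sqrt (2 * Real.pi) * Real.sqrt n) *
        ((n : ℝ) ^ (1 - (j : ℝ) / n) * kappa ((j : ℝ) / n)) ^ n ≤
      (Nat.choose n 2 : ℝ) ^ (n - j) / ((n - j).factorial : ℝ) ∧
    (Nat.choose n 2 : ℝ) ^ (n - j) / ((n - j).factorial : ℝ) ≤
      (1 / Real.sqrt (2 * Real.pi)) *
        ((n : ℝ) ^ (1 - (j : ℝ) / n) * kappa ((j : ℝ) / n)) ^ n := by
  set m := n - j with hmdef
  have hm2 : 2 ≤ m := by omega
  have hmn1 : m ≤ n - 1 := by omega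
  have hjm : j + m = n := by omega
  have hn0 : (0:ℝ) < n := by positivity
  have hnr3 : (3:ℝ) ≤ n := by exact_mod_cast hn
  have hm0 : (0:ℝ) < m := by exact_mod_cast (by omega : 0 < m)
  have hmr2 : (2:ℝ) ≤ m := by exact_mod_cast hm2
  have hmrn : (m:ℝ) ≤ (n:ℝ) - 1 := by
    have h : (m:ℝ) + 1 ≤ (n:ℝ) := by exact_mod_cast (show m + 1 ≤ n by omega)
    linarith
  have he0 : (0:ℝ) < Real.exp 1 := Real.exp_pos 1
  have hjr : (j:ℝ) = (n:ℝ) - m := by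
    have : ((j:ℕ):ℝ) + m = n := by exact_mod_cast hjm
    linarith
  have hx : 1 - (j : ℝ)/n = (m:ℝ)/n := by rw [hjr]; field_simp; ring
  -- key algebraic identity
  have key : ((n : ℝ) ^ (1 - (j : ℝ) / n) * kappa ((j : ℝ) / n)) ^ n
      = ((n:ℝ)^2 * Real.exp 1 / (2*m)) ^ m := by
    rw [kappa, hx]
    set c : ℝ := (m:ℝ)/n with hc
    have hc0 : 0 < c := by positivity
    have hb0 : (0:ℝ) < (n:ℝ) * (Real.exp 1 / 2) / c := by positivity
    have h1 : (n:ℝ)^c * ((Real.exp 1 / 2)^c * c^(-c)) = ((n:ℝ) * (Real.exp 1/2) / c)^c := by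
      rw [Real.rpow_neg hc0.le, Real.div_rpow (by positivity) hc0.le,
        Real.mul_rpow (by positivity) (by positivity)]
      ring
    rw [h1, ← Real.rpow_natCast (((n:ℝ) * (Real.exp 1/2) / c)^c) n,
      ← Real.rpow_mul hb0.le]
    have hcn : c * (n:ℝ) = (m:ℝ) := by rw [hc]; exact div_mul_cancel₀ _ hn0.ne'
    rw [hcn, Real.rpow_natCast]
    congr 1
    rw [hc]
    field_simp
  rw [key]
  have hNval : (Nat.choose n 2 : ℝ) = (n:ℝ) * ((n:ℝ)-1) / 2 := Nat.cast_choose_two ℝ n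
  set N : ℝ := (Nat.choose n 2 : ℝ) with hNdef
  have hN0 : 0 < N := by rw [hNval]; nlinarith
  set F : ℝ := ((m).factorial : ℝ) with hFdef
  have hF0 : 0 < F := by rw [hFdef]; exact_mod_cast m.factorial_pos
  set A : ℝ := N * Real.exp 1 / m with hA
  have hA0 : 0 < A := by positivity
  have hq : (n:ℝ)^2 * Real.exp 1/(2*(m:ℝ)) = A * ((n:ℝ)/((n:ℝ)-1)) := by
    rw [hA, hNval]
    have : (n:ℝ) - 1 ≠ 0 := by nlinarith
    field_simp
  have hs0 : (0:ℝ) < Real.sqrt (2*π) := Real.sqrt_pos.mpr (by positivity)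
  have ht0 : (0:ℝ) < Real.sqrt n := Real.sqrt_pos.mpr hn0
  have hpow_e : ((n:ℝ)/((n:ℝ)-1))^m ≤ Real.exp 1 := by
    have hd : (0:ℝ) < (n:ℝ) - 1 := by nlinarith
    have h2 : (n:ℝ)/((n:ℝ)-1) ≤ Real.exp (1/((n:ℝ)-1)) := by
      have h3 := Real.add_one_le_exp (1/((n:ℝ)-1))
      have h4 : (n:ℝ)/((n:ℝ)-1) = 1/((n:ℝ)-1) + 1 := by field_simp; ring
      linarith
    calc ((n:ℝ)/((n:ℝ)-1))^m ≤ (Real.exp (1/((n:ℝ)-1)))^m := by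
          exact pow_le_pow_left₀ (by positivity) h2 m
      _ = Real.exp ((m:ℝ) * (1/((n:ℝ)-1))) := by rw [← Real.exp_nat_mul]
      _ ≤ Real.exp 1 := by
          apply Real.exp_le_exp.mpr
          rw [mul_one_div, div_le_one hd]
          exact hmrn
  have he1 : Real.exp 1 ≤ 2.7182818286 := Real.exp_one_lt_d9.le
  have hsq : (2.5:ℝ) ≤ Real.sqrt (2*π) := by
    rw [show (2.5:ℝ) = Real.sqrt (2.5^2) by rw [Real.sqrt_sq (by norm_num)]]
    apply Real.sqrt_le_sqrt
    norm_num
    linarith [Real.pi_gt_d6]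
  have hNle : N ≤ (n:ℝ)^2 / 2 := by rw [hNval]; nlinarith
  constructor
  · -- lower bound
    have hupF : F ≤ Real.exp 1 * Real.sqrt m * ((m:ℝ)/Real.exp 1)^m := fact_up m (by omega)
    have hAid : (1/(Real.exp 1 * Real.sqrt m)) * A^m
        = N^m / (Real.exp 1 * Real.sqrt m * ((m:ℝ)/Real.exp 1)^m) := by
      rw [hA, div_pow, div_pow]
      have hsm : (0:ℝ) < Real.sqrt m := Real.sqrt_pos.mpr hm0
      field_simp
      rw [mul_pow, ← Real.exp_nat_mul, mul_one]
      ring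
    have hsmn : Real.sqrt m ≤ Real.sqrt n := by
      apply Real.sqrt_le_sqrt; nlinarith
    have hscal : Real.exp 1 / (4*Real.sqrt (2*π)*Real.sqrt n) ≤ 1/(Real.exp 1 * Real.sqrt n) := by
      rw [div_le_div_iff₀ (by positivity) (by positivity)]
      have h1 : Real.exp 1 * Real.exp 1 * Real.sqrt n ≤ 2.7182818286 * 2.7182818286 * Real.sqrt n := by
        have := mul_le_mul he1 he1 he0.le (by norm_num)
        nlinarith [ht0.le]
      have h2 : 2.5 * Real.sqrt n ≤ Real.sqrt (2*π) * Real.sqrt n :=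
        mul_le_mul_of_nonneg_right hsq ht0.le
      nlinarith
    calc 1 / (4 * Real.sqrt (2 * π) * Real.sqrt n) * ((n:ℝ)^2 * Real.exp 1 / (2*(m:ℝ)))^m
        = 1 / (4 * Real.sqrt (2 * π) * Real.sqrt n) * (A^m * ((n:ℝ)/((n:ℝ)-1))^m) := by
          rw [hq, mul_pow]
      _ ≤ 1 / (4 * Real.sqrt (2 * π) * Real.sqrt n) * (A^m * Real.exp 1) := by
          gcongr
      _ = Real.exp 1 / (4*Real.sqrt (2*π)*Real.sqrt n) * A^m := by ring
      _ ≤ 1/(Real.exp 1 * Real.sqrt n) * A^m := by gcongr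
      _ ≤ 1/(Real.exp 1 * Real.sqrt m) * A^m := by
          gcongr
      _ = N^m / (Real.exp 1 * Real.sqrt m * ((m:ℝ)/Real.exp 1)^m) := hAid
      _ ≤ N^m / F := by gcongr
  · -- upper bound
    have hlowF : Real.sqrt (2*π) * ((m:ℝ)/Real.exp 1)^m ≤ F := fact_low m (by omega)
    have hAid : N^m / (Real.sqrt (2*π) * ((m:ℝ)/Real.exp 1)^m)
        = (1/Real.sqrt (2*π)) * A^m := by
      rw [hA, div_pow, div_pow]
      field_simp
      rw [mul_pow, ← Real.exp_nat_mul, mul_one]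
    calc N^m / F ≤ N^m / (Real.sqrt (2*π) * ((m:ℝ)/Real.exp 1)^m) := by
          gcongr
      _ = (1/Real.sqrt (2*π)) * A^m := hAid
      _ ≤ (1/Real.sqrt (2*π)) * ((n:ℝ)^2 * Real.exp 1 / (2*(m:ℝ)))^m := by
          have hAb : A ≤ (n:ℝ)^2 * Real.exp 1 / (2*(m:ℝ)) := by
            rw [hA, div_le_div_iff₀ hm0 (by positivity)]
            nlinarith [mul_le_mul_of_nonneg_right hNle (mul_pos he0 hm0).le]
          exact mul_le_mul_of_nonneg_left (pow_le_pow_left₀ hA0.le hAb m) (by positivity)
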